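/- Let K ⊆ ℝ^{k×N} be compact and let f : ℝ^{k×N} → ℝ be continuous and invariant under permutations of the N columns. Let t = C(k+N, k) (the binomial coefficient) and let φ : ℝ^k → ℝ^t be the multisymmetric power-sum feature map φ(x) = (x^{α_1},...,x^{α_t}), where α_1,...,α_t enumerate all multi-indices α ∈ ℕ^k with |α| ≤ N and x^α = x_1^{α_1}···x_k^{α_k}. Then for every ε > 0 there exists a polynomial function ρ : ℝ^t → ℝ such that |f(X) − ρ(Σ_{i=1}^N φ(x_i))| < ε for every X ∈ K, where x_1,...,x_N denote the columns of X. -/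

import Mathlib

open Finset MvPolynomial

lemma perm_of_ofFn_eq {α : Type*} : ∀ {n : ℕ} (x y : Fin n → α),
    (↑(List.ofFn x) : Multiset α) = ↑(List.ofFn y) →
    ∃ σ : Equiv.Perm (Fin n), ∀ i, x (σ i) = y i := by
  intro n
  induction n with
  | zero => exact fun x y _ => ⟨1, fun i => i.elim0⟩
  | succ n ih =>
    intro x y h
    have hy0 : y 0 ∈ List.ofFn x := by
      have : y 0 ∈ (↑(List.ofFn y) : Multiset α) := by
        simp [List.mem_ofFn]
      rw [← h] at this
      simpa using this
    rw [List.mem_ofFn] at hy0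
    obtain ⟨j, hj⟩ := hy0
    set x' : Fin (n+1) → α := x ∘ Equiv.swap j 0 with hx'
    have hmx' : (↑(List.ofFn x') : Multiset α) = ↑(List.ofFn x) :=
      Multiset.coe_eq_coe.mpr (Equiv.Perm.ofFn_comp_perm _ x)
    have h' : (↑(List.ofFn x') : Multiset α) = ↑(List.ofFn y) := hmx'.trans h
    rw [List.ofFn_succ, List.ofFn_succ] at h'
    have hx'0 : x' 0 = y 0 := by simp [hx', hj]
    have htail : (↑(List.ofFn (x' ∘ Fin.succ)) : Multiset α) = ↑(List.ofFn (y ∘ Fin.succ)) := by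
      have h2 : (x' 0 ::ₘ ↑(List.ofFn fun i => x' i.succ) : Multiset α)
          = (y 0 ::ₘ ↑(List.ofFn fun i => y i.succ)) := by
        rw [Multiset.cons_coe, Multiset.cons_coe]; exact_mod_cast h'
      rw [hx'0] at h2
      exact (Multiset.cons_inj_right _).mp h2
    obtain ⟨σ', hσ'⟩ := ih (x' ∘ Fin.succ) (y ∘ Fin.succ) htail
    -- build τ : Perm (Fin (n+1)) with τ 0 = 0, τ (succ i) = succ (σ' i)
    refine ⟨((finSuccEquiv n).trans ((Equiv.optionCongr σ').trans (finSuccEquiv n).symm)).trans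
      (Equiv.swap j 0), fun i => ?_⟩
    induction i using Fin.cases with
    | zero =>
      have : Equiv.swap j 0 ((finSuccEquiv n).symm ((Equiv.optionCongr σ') ((finSuccEquiv n) 0))) = j := by
        simp
      simp only [Equiv.trans_apply, this]
      exact hj
    | succ m => simpa [hx'] using hσ' m

-- evaluated Newton recurrence over ℝ
lemma esymm_val_rec {N : ℕ} (x : Fin N → ℝ) (m : ℕ) :
    (m : ℝ) * (Multiset.map x univ.val).esymm m =
      (-1) ^ (m + 1) * ∑ a ∈ filter (fun a => a.1 < m) (antidiagonal m),
        (-1) ^ a.1 * (Multiset.map x univ.val).esymm a.1 * ∑ i, x i ^ a.2 := by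
  have h := congrArg (MvPolynomial.aeval x) (MvPolynomial.mul_esymm_eq_sum (Fin N) ℝ m)
  simpa [map_sum, map_mul, map_pow, map_natCast, aeval_esymm_eq_multiset_esymm,
    MvPolynomial.psum, map_sum, map_pow, aeval_X] using h

lemma multiset_eq_of_psum_eq {N : ℕ} (x y : Fin N → ℝ)
    (h : ∀ m, 1 ≤ m → m ≤ N → ∑ i, x i ^ m = ∑ i, y i ^ m) :
    Multiset.map x univ.val = Multiset.map y univ.val := by
  have hE : ∀ m, m ≤ N →
      (Multiset.map x univ.val).esymm m = (Multiset.map y univ.val).esymm m := by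
    intro m
    induction m using Nat.strong_induction_on with
    | _ m ih =>
      intro hmN
      rcases Nat.eq_zero_or_pos m with rfl | hm
      · simp [Multiset.esymm]
      · have hx := esymm_val_rec x m
        have hy := esymm_val_rec y m
        have hsum : ∑ a ∈ filter (fun a => a.1 < m) (antidiagonal m),
              (-1:ℝ) ^ a.1 * (Multiset.map x univ.val).esymm a.1 * ∑ i, x i ^ a.2
            = ∑ a ∈ filter (fun a => a.1 < m) (antidiagonal m),
              (-1:ℝ) ^ a.1 * (Multiset.map y univ.val).esymm a.1 * ∑ i, y i ^ a.2 := by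
          refine Finset.sum_congr rfl fun a ha => ?_
          rw [mem_filter, Finset.HasAntidiagonal.mem_antidiagonal] at ha
          have h1 : a.1 < m := ha.2
          have h2 : 1 ≤ a.2 := by omega
          have h3 : a.2 ≤ N := by omega
          rw [ih a.1 h1 (by omega), h a.2 h2 h3]
        have hm' : (m : ℝ) ≠ 0 := Nat.cast_ne_zero.mpr (by omega)
        rw [hsum] at hx
        exact mul_left_cancel₀ hm' (hx.trans hy.symm)
  -- products of (X - C r) equal
  have hcard : Multiset.card (Multiset.map x univ.val) = N := by simp
  have hcard' : Multiset.card (Multiset.map y univ.val) = N := by simp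
  have hprod : (Multiset.map (fun t => Polynomial.X - Polynomial.C t) (Multiset.map x univ.val)).prod
      = (Multiset.map (fun t => Polynomial.X - Polynomial.C t) (Multiset.map y univ.val)).prod := by
    rw [Multiset.prod_X_sub_X_eq_sum_esymm, Multiset.prod_X_sub_X_eq_sum_esymm, hcard, hcard']
    refine Finset.sum_congr rfl fun j hj => ?_
    rw [Finset.mem_range] at hj
    rw [hE j (by omega)]
  have := congrArg Polynomial.roots hprod
  rwa [Polynomial.roots_multiset_prod_X_sub_C, Polynomial.roots_multiset_prod_X_sub_C] at this

-- sums over points of evaluations of low-degree polynomials agree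
lemma sum_eval_eq_of_moments {k N : ℕ} (x y : Fin N → Fin k → ℝ)
    (h : ∀ α : Fin k → ℕ, (∑ j, α j) ≤ N →
      ∑ i, ∏ j, x i j ^ α j = ∑ i, ∏ j, y i j ^ α j)
    (p : MvPolynomial (Fin k) ℝ) (hp : p.totalDegree ≤ N) :
    ∑ i, eval (x i) p = ∑ i, eval (y i) p := by
  conv_lhs => rw [MvPolynomial.as_sum p]
  conv_rhs => rw [MvPolynomial.as_sum p]
  simp only [map_sum, eval_monomial]
  rw [Finset.sum_comm, Finset.sum_comm (s := univ)]
  refine Finset.sum_congr rfl fun v hv => ?_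
  have hdeg : (∑ j, v j) ≤ N := by
    have : (v.sum fun _ e => e) ≤ p.totalDegree := MvPolynomial.le_totalDegree hv
    have hs : (v.sum fun _ e => e) = ∑ j, v j := Finsupp.sum_fintype _ _ (fun _ => rfl)
    omega
  have hprod : ∀ z : Fin k → ℝ, (v.prod fun j n => z j ^ n) = ∏ j, z j ^ v j :=
    fun z => Finsupp.prod_fintype _ _ (fun _ => pow_zero _)
  simp only [hprod, ← Finset.mul_sum]
  rw [h (fun j => v j) hdeg]

-- a linear functional injective on a finite set of points
lemma exists_sep_form {k : ℕ} (S : Finset (Fin k → ℝ)) :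
    ∃ w : Fin k → ℝ, ∀ u ∈ S, ∀ v ∈ S, u ≠ v → (∑ j, w j * u j) ≠ ∑ j, w j * v j := by
  classical
  set D : Finset (Fin k → ℝ) := ((S ×ˢ S).image (fun p => p.1 - p.2)).filter (· ≠ 0) with hD
  set P : MvPolynomial (Fin k) ℝ := ∏ d ∈ D, (∑ j, C (d j) * X j) with hP
  have hfac : ∀ d ∈ D, (∑ j, C (d j) * X j : MvPolynomial (Fin k) ℝ) ≠ 0 := by
    intro d hd
    rw [hD, Finset.mem_filter] at hd
    obtain ⟨j0, hj0⟩ := Function.ne_iff.mp hd.2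
    intro hzero
    have := congrArg (eval (Pi.single j0 1)) hzero
    simp [eval_sum, Pi.single_apply, Finset.sum_ite_eq'] at this
    exact hj0 (by simpa using this)
  have hPne : P ≠ 0 := Finset.prod_ne_zero_iff.mpr hfac
  have : ∃ w, eval w P ≠ 0 := by
    by_contra hw
    push_neg at hw
    exact hPne (MvPolynomial.funext (q := 0) (by simpa using hw))
  obtain ⟨w, hw⟩ := this
  refine ⟨w, fun u hu v hv huv heq => ?_⟩
  have hdmem : u - v ∈ D := by
    rw [hD, Finset.mem_filter]
    exact ⟨Finset.mem_image.mpr ⟨(u, v), Finset.mem_product.mpr ⟨hu, hv⟩, rfl⟩, sub_ne_zero.mpr huv⟩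
  rw [hP, map_prod] at hw
  refine hw (Finset.prod_eq_zero hdmem ?_)
  have h2 : ∑ j, u j * w j = ∑ j, v j * w j := by
    simpa [mul_comm] using heq
  simp only [map_sum, map_mul, eval_C, eval_X, Pi.sub_apply, sub_mul]
  rw [Finset.sum_sub_distrib, h2, sub_self]

lemma sep_columns {k N : ℕ} (x y : Fin N → Fin k → ℝ)
    (h : ∀ α : Fin k → ℕ, (∑ j, α j) ≤ N →
      ∑ i, ∏ j, x i j ^ α j = ∑ i, ∏ j, y i j ^ α j) :
    ∃ σ : Equiv.Perm (Fin N), ∀ i, x (σ i) = y i := by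
  classical
  obtain ⟨w, hw⟩ := exists_sep_form ((univ.image x) ∪ (univ.image y))
  set L : MvPolynomial (Fin k) ℝ := ∑ j, C (w j) * X j with hL
  have hLdeg : L.totalDegree ≤ 1 := by
    refine (MvPolynomial.totalDegree_finset_sum _ _).trans ?_
    refine Finset.sup_le fun j _ => ?_
    exact (MvPolynomial.totalDegree_mul _ _).trans
      (by simp [MvPolynomial.totalDegree_C, MvPolynomial.totalDegree_X])
  have hLeval : ∀ z : Fin k → ℝ, eval z L = ∑ j, w j * z j := by
    intro z; simp [hL, eval_sum]
  set u : Fin N → ℝ := fun i => ∑ j, w j * x i j with hu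
  set v : Fin N → ℝ := fun i => ∑ j, w j * y i j with hv
  have hps : ∀ m, 1 ≤ m → m ≤ N → ∑ i, u i ^ m = ∑ i, v i ^ m := by
    intro m _ hmN
    have := sum_eval_eq_of_moments x y h (L ^ m)
      ((MvPolynomial.totalDegree_pow _ _).trans ((Nat.mul_le_mul_left m hLdeg).trans (by omega)))
    simpa [map_pow, hLeval, hu, hv] using this
  have hms := multiset_eq_of_psum_eq u v hps
  have hms' : (↑(List.ofFn u) : Multiset ℝ) = ↑(List.ofFn v) := by
    have e1 : (Multiset.map u univ.val) = ↑(List.ofFn u) := by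
      simp [List.ofFn_eq_map, Fin.univ_def]
    have e2 : (Multiset.map v univ.val) = ↑(List.ofFn v) := by
      simp [List.ofFn_eq_map, Fin.univ_def]
    rw [← e1, ← e2, hms]
  obtain ⟨σ, hσ⟩ := perm_of_ofFn_eq u v hms'
  refine ⟨σ, fun i => ?_⟩
  by_contra hne
  exact hw (x (σ i)) (Finset.mem_union_left _ (Finset.mem_image_of_mem x (mem_univ _)))
    (y i) (Finset.mem_union_right _ (Finset.mem_image_of_mem y (mem_univ _))) hne (hσ i)

/-- DeepSets universality via multisymmetric power sums,
`t = C(k+N, k)`.  Let `K ⊆ ℝ^{k×N}` be compact and `f : ℝ^{k×N} → ℝ` continuous and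
invariant under permutations of the `N` columns.  Let `e` enumerate all multi-indices
`α ∈ ℕ^k` with `|α| ≤ N` by `Fin (C(k+N,k))`, and let `φ : ℝ^k → ℝ^t` be the power-sum
feature map `φ(x)ₜ = x^{αₜ}`.  Then for every `ε > 0` there is a polynomial function
`ρ : ℝ^t → ℝ` with `|f X - ρ (∑ i, φ (column i of X))| < ε` for all `X ∈ K`. -/
theorem deepsets_universality_power_sums
    (k N : ℕ) (K : Set (Matrix (Fin k) (Fin N) ℝ)) (hK : IsCompact K)
    (f : Matrix (Fin k) (Fin N) ℝ → ℝ) (hf : Continuous f)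
    (hf_inv : ∀ (X : Matrix (Fin k) (Fin N) ℝ) (σ : Equiv.Perm (Fin N)),
      f (fun r c => X r (σ c)) = f X)
    (e : Fin ((k + N).choose k) ≃ {α : Fin k → ℕ // (∑ j, α j) ≤ N})
    (ε : ℝ) (hε : 0 < ε) :
    ∃ q : MvPolynomial (Fin ((k + N).choose k)) ℝ,
      ∀ X ∈ K,
        |f X - MvPolynomial.eval
            (∑ i : Fin N, fun t : Fin ((k + N).choose k) =>
              ∏ j : Fin k, X j i ^ ((e t : Fin k → ℕ) j)) q| < ε := by
  classical
  set Φ : Matrix (Fin k) (Fin N) ℝ → (Fin ((k + N).choose k) → ℝ) :=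
    fun X => ∑ i : Fin N, fun t : Fin ((k + N).choose k) => ∏ j : Fin k, X j i ^ ((e t : Fin k → ℕ) j) with hΦ
  have hΦapp : ∀ X (s : Fin ((k + N).choose k)), Φ X s = ∑ i : Fin N, ∏ j, X j i ^ ((e s : Fin k → ℕ) j) := by
    intro X s
    rw [hΦ]
    exact Finset.sum_apply s univ _
  have hΦcont : Continuous Φ := by
    rw [hΦ]
    refine continuous_finset_sum _ fun i _ => continuous_pi fun t => ?_
    exact continuous_finset_prod _ fun j _ =>
      (((continuous_apply i).comp (continuous_apply j)).pow _)
  have hsep : ∀ X Y : Matrix (Fin k) (Fin N) ℝ, Φ X = Φ Y → f X = f Y := by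
    intro X Y hXY
    have hmom : ∀ α : Fin k → ℕ, (∑ j, α j) ≤ N →
        ∑ i, ∏ j, X j i ^ α j = ∑ i, ∏ j, Y j i ^ α j := by
      intro α hα
      have := congrFun hXY (e.symm ⟨α, hα⟩)
      rw [hΦapp, hΦapp, e.apply_symm_apply] at this
      exact this
    obtain ⟨σ, hσ⟩ := sep_columns (fun i j => X j i) (fun i j => Y j i) hmom
    have hYX : Y = fun r c => X r (σ c) := by
      funext r c
      exact (congrFun (hσ c) r).symm
    rw [hYX, hf_inv]
  set S : Set (Fin ((k + N).choose k) → ℝ) := Φ '' K with hS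
  haveI : CompactSpace ↥S := isCompact_iff_compactSpace.mp (hK.image hΦcont)
  haveI : CompactSpace ↥K := isCompact_iff_compactSpace.mp hK
  set g : (Fin ((k + N).choose k) → ℝ) → ℝ := fun s =>
    if h : ∃ X, X ∈ K ∧ Φ X = s then f h.choose else 0 with hg
  have hgΦ : ∀ X ∈ K, g (Φ X) = f X := by
    intro X hX
    have hex : ∃ Y, Y ∈ K ∧ Φ Y = Φ X := ⟨X, hX, rfl⟩
    rw [hg]
    simp only [dif_pos hex]
    exact hsep _ _ hex.choose_spec.2
  -- quotient map
  set ΦK : ↥K → ↥S := fun X => ⟨Φ X.1, ⟨X.1, X.2, rfl⟩⟩ with hΦK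
  have hΦKcont : Continuous ΦK :=
    Continuous.subtype_mk (hΦcont.comp continuous_subtype_val) _
  have hΦKsurj : Function.Surjective ΦK := by
    rintro ⟨s, X, hXK, rfl⟩
    exact ⟨⟨X, hXK⟩, rfl⟩
  have hqm : Topology.IsQuotientMap ΦK :=
    hΦKcont.isClosedMap.isQuotientMap hΦKcont hΦKsurj
  have hgScont : Continuous (S.restrict g) := by
    rw [hqm.continuous_iff]
    have : (S.restrict g) ∘ ΦK = fun X : ↥K => f X.1 :=
      funext fun X => hgΦ X.1 X.2
    rw [this]
    exact hf.comp continuous_subtype_val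
  -- Stone-Weierstrass
  set coords : Fin ((k + N).choose k) → C(↥S, ℝ) := fun i =>
    ⟨fun s => (s : Fin ((k + N).choose k) → ℝ) i, (continuous_apply i).comp continuous_subtype_val⟩ with hcoords
  set A : Subalgebra ℝ C(↥S, ℝ) :=
    (MvPolynomial.aeval coords : MvPolynomial (Fin ((k + N).choose k)) ℝ →ₐ[ℝ] C(↥S, ℝ)).range with hA
  have hAsep : A.SeparatesPoints := by
    intro z z' hzz'
    have : (z : Fin ((k + N).choose k) → ℝ) ≠ (z' : Fin ((k + N).choose k) → ℝ) := fun h => hzz' (Subtype.ext h)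
    obtain ⟨i, hi⟩ := Function.ne_iff.mp this
    refine ⟨⇑(coords i), ⟨coords i, ⟨MvPolynomial.X i, by simp⟩, rfl⟩, hi⟩
  have hev : ∀ (q : MvPolynomial (Fin ((k + N).choose k)) ℝ) (z : ↥S),
      (MvPolynomial.aeval coords q : C(↥S, ℝ)) z = MvPolynomial.eval (z : Fin ((k + N).choose k) → ℝ) q := by
    intro q z
    induction q using MvPolynomial.induction_on with
    | C a => simp [hcoords]
    | add p q hp hq => simp [hp, hq]
    | mul_X p i hp => rw [hcoords] at hp; simp [hp, hcoords]
  obtain ⟨p, hp⟩ := ContinuousMap.exists_mem_subalgebra_near_continuous_of_separatesPoints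
    A hAsep (S.restrict g) hgScont ε hε
  obtain ⟨q, hq⟩ := p.2
  refine ⟨q, fun X hX => ?_⟩
  have hgoal : (∑ i : Fin N, fun t : Fin ((k + N).choose k) => ∏ j : Fin k, X j i ^ ((e t : Fin k → ℕ) j)) = Φ X := rfl
  rw [hgoal]
  have hz : Φ X ∈ S := ⟨X, hX, rfl⟩
  have := hp ⟨Φ X, hz⟩
  rw [Real.norm_eq_abs] at this
  have h1 : (p : C(↥S, ℝ)) ⟨Φ X, hz⟩ = MvPolynomial.eval (Φ X) q := by
    rw [← hq]; exact hev q ⟨Φ X, hz⟩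
  have h2 : S.restrict g ⟨Φ X, hz⟩ = f X := hgΦ X hX
  rw [h1, h2] at this
  rw [abs_sub_comm]
  exact this
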